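/- For an odd prime p, two elements of SL₂(ℤ/pℤ) whose traces are not equal to ±2 are conjugate if and only if their traces are equal. -/

import Mathlib

open Matrix Polynomial

section Aux

variable {p : ℕ} [Fact p.Prime]

private lemma scharlau_two_ne_zero (hp : p ≠ 2) : (2 : ZMod p) ≠ 0 := by
  have : ((2 : ℕ) : ZMod p) ≠ 0 := by
    rw [Ne, ZMod.natCast_eq_zero_iff]
    intro h
    exact hp ((Nat.prime_dvd_prime_iff_eq Fact.out Nat.prime_two).mp h)
  simpa using this

private lemma scharlau_rep (hp : p ≠ 2) (t u : ZMod p) (ht : t ^ 2 - 4 ≠ 0) :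
    ∃ a b : ZMod p, a ^ 2 + a * b * t + b ^ 2 = u := by
  have h2 : (2 : ZMod p) ≠ 0 := scharlau_two_ne_zero hp
  have h4 : (4 : ZMod p) ≠ 0 := by
    intro h; apply h2; have : (2 : ZMod p) * 2 = 0 := by rw [← h]; norm_num
    rcases mul_eq_zero.mp this with h | h <;> exact h
  have hq : (4 - t ^ 2 : ZMod p) ≠ 0 := by
    intro h; apply ht; linear_combination -h
  have hcard : Fintype.card (ZMod p) % 2 = 1 := by
    rw [ZMod.card]
    exact Nat.odd_iff.mp ((Fact.out : p.Prime).odd_of_ne_two hp)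
  obtain ⟨x, y, hxy⟩ := FiniteField.exists_root_sum_quadratic
    (f := X ^ 2 - C u) (g := C (4 - t ^ 2) * X ^ 2)
    (degree_X_pow_sub_C (by norm_num) u) (degree_C_mul_X_pow 2 hq) hcard
  simp only [eval_sub, eval_pow, eval_X, eval_C, eval_mul] at hxy
  -- hxy : x ^ 2 - u + (4 - t ^ 2) * y ^ 2 = 0
  refine ⟨x - y * t, 2 * y, ?_⟩
  -- we want a form with value 4u? check scaling
  linear_combination hxy

private lemma scharlau_key (hp : p ≠ 2) (A : Matrix.SpecialLinearGroup (Fin 2) (ZMod p))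
    (hA : (A : Matrix (Fin 2) (Fin 2) (ZMod p)).trace ≠ 2)
    (hA' : (A : Matrix (Fin 2) (Fin 2) (ZMod p)).trace ≠ -2) :
    ∃ Q : Matrix (Fin 2) (Fin 2) (ZMod p), Q.det = 1 ∧
      Q * !![0, -1; 1, (A : Matrix (Fin 2) (Fin 2) (ZMod p)).trace]
        = (A : Matrix (Fin 2) (Fin 2) (ZMod p)) * Q := by
  set M := (A : Matrix (Fin 2) (Fin 2) (ZMod p)) with hM
  set t := M.trace with htr
  have hdet : M.det = 1 := A.2
  rw [Matrix.det_fin_two] at hdet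
  have htr2 : t = M 0 0 + M 1 1 := Matrix.trace_fin_two M
  set C : Matrix (Fin 2) (Fin 2) (ZMod p) := !![0, -1; 1, t] with hC
  have step1 : ∃ P : Matrix (Fin 2) (Fin 2) (ZMod p), P.det ≠ 0 ∧ M * P = P * C := by
    by_cases hc : M 1 0 ≠ 0
    · refine ⟨!![1, M 0 0; 0, M 1 0], by simpa [Matrix.det_fin_two_of] using hc, ?_⟩
      ext i j
      fin_cases i <;> fin_cases j <;>
        simp [hC, Matrix.mul_apply, Fin.sum_univ_two, htr2] <;>
        first | ring1 | linear_combination hdet | linear_combination -hdet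
    · push_neg at hc
      by_cases hb : M 0 1 ≠ 0
      · refine ⟨!![0, M 0 1; 1, M 1 1], by simpa [Matrix.det_fin_two_of] using hb, ?_⟩
        ext i j
        fin_cases i <;> fin_cases j <;>
          simp [hC, Matrix.mul_apply, Fin.sum_univ_two, htr2] <;>
          first | ring1 | linear_combination hdet | linear_combination -hdet
      · push_neg at hb
        have had : M 1 1 - M 0 0 ≠ 0 := by
          intro h
          have h2 : (M 0 0 - 1) * (M 0 0 + 1) = 0 := by
            linear_combination hdet - M 0 0 * h + M 1 0 * hb
          rcases mul_eq_zero.mp h2 with h' | h'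
          · exact hA (by linear_combination htr2 + h + 2 * h')
          · exact hA' (by linear_combination htr2 + h + 2 * h')
        refine ⟨!![1, M 0 0; 1, M 1 1], by simpa [Matrix.det_fin_two_of] using had, ?_⟩
        ext i j
        fin_cases i <;> fin_cases j <;>
          simp [hC, Matrix.mul_apply, Fin.sum_univ_two, htr2] <;>
          first
            | ring1
            | linear_combination hdet
            | linear_combination -hdet
            | linear_combination hb
            | linear_combination hc
            | linear_combination -(M 1 0) * hb
            | linear_combination M 1 1 * hb - hdet - M 1 0 * hb
            | linear_combination M 0 0 * hc - hdet - M 1 0 * hb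
  obtain ⟨P, hPdet, hPC⟩ := step1
  have ht4 : t ^ 2 - 4 ≠ 0 := by
    intro h
    rcases mul_eq_zero.mp (show (t - 2) * (t + 2) = 0 by linear_combination h) with h' | h'
    · exact hA (sub_eq_zero.mp h')
    · exact hA' (eq_neg_of_add_eq_zero_left h')
  obtain ⟨a, b, hab⟩ := scharlau_rep hp t P.det ht4
  set S : Matrix (Fin 2) (Fin 2) (ZMod p) := !![a, -b; b, a + b * t] with hS
  have hSdet : S.det = P.det := by
    rw [hS, Matrix.det_fin_two_of]; linear_combination hab
  have hSC : S * C = C * S := by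
    ext i j
    fin_cases i <;> fin_cases j <;>
      simp [hS, hC, Matrix.mul_apply, Fin.sum_univ_two] <;> ring
  have hSunit : IsUnit S.det := by rw [hSdet]; exact Ne.isUnit hPdet
  have h1 : S⁻¹ * S = 1 := Matrix.nonsing_inv_mul S hSunit
  have h2 : S * S⁻¹ = 1 := Matrix.mul_nonsing_inv S hSunit
  refine ⟨P * S⁻¹, ?_, ?_⟩
  · rw [Matrix.det_mul, Matrix.det_nonsing_inv, hSdet,
      Ring.mul_inverse_cancel _ (Ne.isUnit hPdet)]
  · have hinv : S⁻¹ * C = C * S⁻¹ := by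
      calc S⁻¹ * C = S⁻¹ * C * (S * S⁻¹) := by rw [h2, mul_one]
        _ = S⁻¹ * (S * C) * S⁻¹ := by rw [hSC]; simp only [mul_assoc]
        _ = C * S⁻¹ := by rw [← Matrix.mul_assoc, h1, one_mul]
    calc P * S⁻¹ * C = P * (S⁻¹ * C) := by rw [mul_assoc]
      _ = P * C * S⁻¹ := by rw [hinv, mul_assoc]
      _ = M * P * S⁻¹ := by rw [hPC]
      _ = M * (P * S⁻¹) := by rw [mul_assoc]

end Aux

theorem scharlau_stmt1 (p : ℕ) [Fact p.Prime] (hp : p ≠ 2)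
    (A B : Matrix.SpecialLinearGroup (Fin 2) (ZMod p))
    (hA : (A : Matrix (Fin 2) (Fin 2) (ZMod p)).trace ≠ 2)
    (hA' : (A : Matrix (Fin 2) (Fin 2) (ZMod p)).trace ≠ -2)
    (hB : (B : Matrix (Fin 2) (Fin 2) (ZMod p)).trace ≠ 2)
    (hB' : (B : Matrix (Fin 2) (Fin 2) (ZMod p)).trace ≠ -2) :
    IsConj A B ↔
      (A : Matrix (Fin 2) (Fin 2) (ZMod p)).trace
        = (B : Matrix (Fin 2) (Fin 2) (ZMod p)).trace := by
  constructor
  · intro h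
    obtain ⟨c, hc⟩ := isConj_iff.mp h
    set m := ((c⁻¹ : Matrix.SpecialLinearGroup (Fin 2) (ZMod p)) :
      Matrix (Fin 2) (Fin 2) (ZMod p)) with hm
    have hmc : m * (c : Matrix (Fin 2) (Fin 2) (ZMod p)) = 1 := by
      rw [hm, ← Matrix.SpecialLinearGroup.coe_mul, inv_mul_cancel]
      rfl
    have hmat : (B : Matrix (Fin 2) (Fin 2) (ZMod p))
        = (c : Matrix (Fin 2) (Fin 2) (ZMod p)) * (A : Matrix (Fin 2) (Fin 2) (ZMod p)) * m := by
      rw [hm, ← Matrix.SpecialLinearGroup.coe_mul, ← Matrix.SpecialLinearGroup.coe_mul, hc]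
    rw [hmat, Matrix.trace_mul_comm, ← Matrix.mul_assoc, hmc, Matrix.one_mul]
  · intro h
    obtain ⟨QA, hQAdet, hQA⟩ := scharlau_key hp A hA hA'
    obtain ⟨QB, hQBdet, hQB⟩ := scharlau_key hp B hB hB'
    rw [← h] at hQB
    have hCdet : (!![0, -1; 1, (A : Matrix (Fin 2) (Fin 2) (ZMod p)).trace]).det = 1 := by
      simp [Matrix.det_fin_two_of]
    set Cg : Matrix.SpecialLinearGroup (Fin 2) (ZMod p) := ⟨_, hCdet⟩ with hCg
    have cA : IsConj Cg A := by
      refine isConj_iff.mpr ⟨⟨QA, hQAdet⟩, ?_⟩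
      apply mul_inv_eq_iff_eq_mul.mpr
      exact Subtype.ext hQA
    have cB : IsConj Cg B := by
      refine isConj_iff.mpr ⟨⟨QB, hQBdet⟩, ?_⟩
      apply mul_inv_eq_iff_eq_mul.mpr
      exact Subtype.ext hQB
    exact cA.symm.trans cB
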